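/- Every vertex of the upper image P = P[S] + C is a C-minimal point of P, where C is a nontrivial convex pointed cone. -/
import Mathlib


/-- Every vertex of the upper image 𝒫 = P[S] + C is a C-minimal point of 𝒫,
where C is a nontrivial convex pointed cone. -/
theorem vertex_is_C_minimal
    (q n : ℕ) (P : Matrix (Fin q) (Fin n) ℝ) (S : Set (Fin n → ℝ)) (hS : S.Nonempty)
    (C : Set (Fin q → ℝ))
    (hCconv : Convex ℝ C)
    (hCcone : ∀ t : ℝ, 0 ≤ t → ∀ x ∈ C, t • x ∈ C)
    (hCpointed : ∀ x ∈ C, -x ∈ C → x = 0)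
    (hCne0 : C ≠ {0}) (hCneuniv : C ≠ Set.univ)
    (Pup : Set (Fin q → ℝ))
    (hPup : Pup = {y | ∃ x ∈ S, ∃ k ∈ C, y = P.mulVec x + k})
    (y : Fin q → ℝ) (hy : y ∈ Pup)
    (hvertex : ∀ a ∈ Pup, ∀ b ∈ Pup, ∀ lam : ℝ, 0 < lam → lam < 1 →
      y = lam • a + (1 - lam) • b → a = y ∧ b = y) :
    ¬ ∃ k ∈ C, k ≠ 0 ∧ y - k ∈ Pup := by
  rintro ⟨k, hkC, hk0, hykPup⟩
  -- C is closed under addition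
  have hadd : ∀ u ∈ C, ∀ v ∈ C, u + v ∈ C := by
    intro u hu v hv
    have h := hCconv hu hv (by norm_num : (0:ℝ) ≤ 1/2) (by norm_num : (0:ℝ) ≤ 1/2) (by norm_num)
    have h2 := hCcone 2 (by norm_num) _ h
    convert h2 using 1
    simp [smul_smul, smul_add]
  -- y + k ∈ Pup
  have hykPup' : y + k ∈ Pup := by
    rw [hPup] at hy ⊢
    obtain ⟨x, hx, c, hc, hyc⟩ := hy
    exact ⟨x, hx, c + k, hadd c hc k hkC, by rw [hyc]; abel⟩
  have := hvertex (y - k) hykPup (y + k) hykPup' (1/2) (by norm_num) (by norm_num)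
    (by module)
  have hk : y - k = y := this.1
  exact hk0 (sub_eq_self.mp hk)
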